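/- Suppose x_{m+1} = A_m x_m admits a general dichotomy with bounds (a_{m,n}) and (b_{m,n}), the f_m are Lipschitz with f_m(0)=0, α < +∞, β < +∞, and 2α + max{2β, √β} < 1. Define the operator Φ on 𝒳 by (Φφ)_n(ξ) = − Σ_{k=n}^{∞} (𝒜_{k+1,n}|_{F_n})^{−1} Q_{k+1} f_k(x^φ_{n,k}(ξ) + φ_k(x^φ_{n,k}(ξ))). Then for all φ, ψ ∈ 𝒳, d(Φφ, Φψ) ≤ (β/(1 − 2α)²) d(φ, ψ), where d(φ,ψ) = sup{‖φ_n(ξ) − ψ_n(ξ)‖/‖ξ‖ : n ∈ ℕ, ξ ∈ E_n \ {0}}; in particular, since β/(1 − 2α)² < 1, Φ is a contraction on 𝒳. -/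

import Mathlib

/-- `calA A m n` is the linear evolution operator
`𝒜_{m,n} = A_{m-1} ∘ ⋯ ∘ A_n` (and the identity if `m ≤ n`). -/
def calA {X : Type*} [NormedAddCommGroup X] [NormedSpace ℝ X]
    (A : ℕ → X →L[ℝ] X) : ℕ → ℕ → X →L[ℝ] X
  | 0, _ => ContinuousLinearMap.id ℝ X
  | m + 1, n => if m + 1 ≤ n then ContinuousLinearMap.id ℝ X else (A m).comp (calA A m n)

set_option maxHeartbeats 1000000 in
/-- The operator `Φ` is a contraction on `(𝒳, d)` :
`d(Φ φ, Φ ψ) ≤ (β/(1-2α)²) d(φ, ψ)` with `β/(1-2α)² < 1`. -/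
theorem Phi_contraction
    {X : Type*} [NormedAddCommGroup X] [NormedSpace ℝ X] [CompleteSpace X]
    (A P : ℕ → X →L[ℝ] X) (B : ℕ → ℕ → X →L[ℝ] X) (a b : ℕ → ℕ → ℝ)
    -- the bounds are positive
    (ha : ∀ m n : ℕ, n ≤ m → 0 < a m n) (hb : ∀ m n : ℕ, n ≤ m → 0 < b m n)
    -- the `P n` are bounded projections
    (hproj : ∀ n, (P n).comp (P n) = P n)
    -- (S1) : `P m ∘ 𝒜_{m,n} = 𝒜_{m,n} ∘ P n`
    (hS1 : ∀ m n : ℕ, n ≤ m → (P m).comp (calA A m n) = (calA A m n).comp (P n))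
    -- (S2)/(S3) : `B m n` is the operator `(𝒜_{m,n}|_{F n})⁻¹ ∘ Q m`, where `Q m = Id - P m`;
    -- its existence encodes that `𝒜_{m,n}` maps `F n = ker (P n)` bijectively onto `F m`
    (hB1 : ∀ m n : ℕ, n ≤ m → ∀ x : X, calA A m n (B m n x) = x - P m x)
    (hB2 : ∀ m n : ℕ, n ≤ m → ∀ x : X, B m n (calA A m n x) = x - P n x)
    (hBF : ∀ m n : ℕ, n ≤ m → ∀ x : X, P n (B m n x) = 0)
    -- (D1) : `‖𝒜_{m,n} P n‖ ≤ a m n`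
    (hD1 : ∀ m n : ℕ, n ≤ m → ‖(calA A m n).comp (P n)‖ ≤ a m n)
    -- (D2) : `‖(𝒜_{m,n}|_{F n})⁻¹ Q m‖ ≤ b m n`
    (hD2 : ∀ m n : ℕ, n ≤ m → ‖B m n‖ ≤ b m n)
    -- the perturbations `f k` vanish at `0` and are Lipschitz with constant `L k`
    (f : ℕ → X → X) (L : ℕ → ℝ) (hL0 : ∀ k, 0 ≤ L k) (hf0 : ∀ k, f k 0 = 0)
    (hLip : ∀ (k : ℕ) (u v : X), ‖f k u - f k v‖ ≤ L k * ‖u - v‖)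
    -- `α = sup_{m>n} (1/a_{m,n}) ∑_{k=n}^{m-1} a_{m,k+1} a_{k,n} Lip(f k) < ∞`
    (α : ℝ)
    (hα : IsLUB {r : ℝ | ∃ m n : ℕ, n < m ∧
      r = (∑ k ∈ Finset.Ico n m, a m (k + 1) * (a k n * L k)) / a m n} α)
    -- `β = sup_n ∑_{k=n}^{∞} b_{k+1,n} a_{k,n} Lip(f k) < ∞`
    (β : ℝ)
    (hsum : ∀ n : ℕ, Summable fun j : ℕ => b (n + j + 1) n * (a (n + j) n * L (n + j)))
    (hβ : IsLUB {r : ℝ | ∃ n : ℕ,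
      r = ∑' j : ℕ, b (n + j + 1) n * (a (n + j) n * L (n + j))} β)
    -- `2α + max {2β, √β} < 1`
    (hcond : 2 * α + max (2 * β) (Real.sqrt β) < 1)
    (φ : ∀ n : ℕ, LinearMap.range (P n : X →ₗ[ℝ] X) → LinearMap.ker (P n : X →ₗ[ℝ] X))
    (hφ : ((∀ n, φ n 0 = 0) ∧
      ∀ (n : ℕ) (ξ ξ' : LinearMap.range (P n : X →ₗ[ℝ] X)),
        ‖(φ n ξ : X) - (φ n ξ' : X)‖ ≤ ‖(ξ : X) - (ξ' : X)‖))
    (ψ : ∀ n : ℕ, LinearMap.range (P n : X →ₗ[ℝ] X) → LinearMap.ker (P n : X →ₗ[ℝ] X))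
    (hψ : ((∀ n, ψ n 0 = 0) ∧
      ∀ (n : ℕ) (ξ ξ' : LinearMap.range (P n : X →ₗ[ℝ] X)),
        ‖(ψ n ξ : X) - (ψ n ξ' : X)‖ ≤ ‖(ξ : X) - (ξ' : X)‖))
    (x : ∀ n m : ℕ, LinearMap.range (P n : X →ₗ[ℝ] X) → LinearMap.range (P m : X →ₗ[ℝ] X))
    (hx : ∀ n : ℕ, ((∀ m : ℕ, n ≤ m → x n m 0 = 0) ∧
      (∃ C : ℝ, ∀ m : ℕ, n ≤ m → ∀ ξ : LinearMap.range (P n : X →ₗ[ℝ] X),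
        ‖(x n m ξ : X)‖ ≤ C * (a m n * ‖(ξ : X)‖)) ∧
      (∀ m : ℕ, n ≤ m → ∀ ξ : LinearMap.range (P n : X →ₗ[ℝ] X),
        (x n m ξ : X) = calA A m n (ξ : X) +
          ∑ k ∈ Finset.Ico n m,
            calA A m (k + 1) (P (k + 1) (f k ((x n k ξ : X) + (φ k (x n k ξ) : X)))))))
    (y : ∀ n m : ℕ, LinearMap.range (P n : X →ₗ[ℝ] X) → LinearMap.range (P m : X →ₗ[ℝ] X))
    (hy : ∀ n : ℕ, ((∀ m : ℕ, n ≤ m → y n m 0 = 0) ∧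
      (∃ C : ℝ, ∀ m : ℕ, n ≤ m → ∀ ξ : LinearMap.range (P n : X →ₗ[ℝ] X),
        ‖(y n m ξ : X)‖ ≤ C * (a m n * ‖(ξ : X)‖)) ∧
      (∀ m : ℕ, n ≤ m → ∀ ξ : LinearMap.range (P n : X →ₗ[ℝ] X),
        (y n m ξ : X) = calA A m n (ξ : X) +
          ∑ k ∈ Finset.Ico n m,
            calA A m (k + 1) (P (k + 1) (f k ((y n k ξ : X) + (ψ k (y n k ξ) : X)))))))
    -- `φ' = Φ φ` and `ψ' = Φ ψ`
    (φ' ψ' : ∀ n : ℕ, LinearMap.range (P n : X →ₗ[ℝ] X) → LinearMap.ker (P n : X →ₗ[ℝ] X))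
    (hΦφ : ∀ (n : ℕ) (ξ : LinearMap.range (P n : X →ₗ[ℝ] X)),
      HasSum
        (fun j : ℕ => B (n + j + 1) n (f (n + j)
          ((x n (n + j) ξ : X) + (φ (n + j) (x n (n + j) ξ) : X))))
        (-(φ' n ξ : X)))
    (hΦψ : ∀ (n : ℕ) (ξ : LinearMap.range (P n : X →ₗ[ℝ] X)),
      HasSum
        (fun j : ℕ => B (n + j + 1) n (f (n + j)
          ((y n (n + j) ξ : X) + (ψ (n + j) (y n (n + j) ξ) : X))))
        (-(ψ' n ξ : X)))
    :
    (∀ (n : ℕ) (ξ : LinearMap.range (P n : X →ₗ[ℝ] X)), ξ ≠ 0 →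
      ‖(φ' n ξ : X) - (ψ' n ξ : X)‖ ≤
        β / (1 - 2 * α) ^ 2 *
          sSup {r : ℝ | ∃ (k : ℕ) (ζ : LinearMap.range (P k : X →ₗ[ℝ] X)), ζ ≠ 0 ∧
            r = ‖(φ k ζ : X) - (ψ k ζ : X)‖ / ‖(ζ : X)‖} *
          ‖(ξ : X)‖) ∧
    β / (1 - 2 * α) ^ 2 < 1 := by
  classical
  obtain ⟨hφ0, hφlip⟩ := hφ
  obtain ⟨hψ0, hψlip⟩ := hψ
  -- nonnegativity of the summands
  have hterm : ∀ (m nn k : ℕ), nn ≤ k → k < m → 0 ≤ a m (k+1) * (a k nn * L k) :=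
    fun m nn k h1 h2 => mul_nonneg (ha m (k+1) h2).le (mul_nonneg (ha k nn h1).le (hL0 k))
  have hα0 : 0 ≤ α := by
    refine le_trans ?_ (hα.1 ⟨1, 0, Nat.zero_lt_one, rfl⟩)
    refine div_nonneg (Finset.sum_nonneg fun k hk => ?_) (ha 1 0 (Nat.zero_le _)).le
    rw [Finset.mem_Ico] at hk
    exact hterm 1 0 k hk.1 hk.2
  have hβ0 : 0 ≤ β := by
    refine le_trans ?_ (hβ.1 ⟨0, rfl⟩)
    exact tsum_nonneg fun j => mul_nonneg (hb _ _ (by omega)).le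
      (mul_nonneg (ha _ _ (by omega)).le (hL0 _))
  have hmax0 : (0:ℝ) ≤ max (2*β) (Real.sqrt β) :=
    le_trans (Real.sqrt_nonneg β) (le_max_right _ _)
  have h2α : 2*α < 1 := by linarith
  have h1 : (0:ℝ) < 1 - 2*α := by linarith
  have hβlt : β < (1 - 2*α)^2 := by
    have h2 : Real.sqrt β < 1 - 2*α := by
      have := le_max_right (2*β) (Real.sqrt β); linarith
    exact (Real.sqrt_lt' h1).1 h2
  have hfrac : β / (1 - 2*α)^2 < 1 := (div_lt_one (by positivity)).2 hβlt
  set γ : ℝ := 1/(1-2*α) with hγdef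
  have hγpos : 0 < γ := by positivity
  have hγ : (1 - 2*α) * γ = 1 := by rw [hγdef, mul_one_div, div_self h1.ne']
  -- bounds derived from the suprema hypotheses
  have hαsum : ∀ (m nn : ℕ), nn ≤ m →
      ∑ k ∈ Finset.Ico nn m, a m (k+1) * (a k nn * L k) ≤ α * a m nn := by
    intro m nn h
    rcases eq_or_lt_of_le h with rfl | hlt
    · rw [Finset.Ico_self, Finset.sum_empty]
      exact mul_nonneg hα0 (ha nn nn le_rfl).le
    · have h2 := hα.1 ⟨m, nn, hlt, rfl⟩
      rw [div_le_iff₀ (ha m nn h)] at h2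
      linarith
  have hβsum : ∀ nn : ℕ,
      ∑' j : ℕ, b (nn + j + 1) nn * (a (nn + j) nn * L (nn + j)) ≤ β :=
    fun nn => hβ.1 ⟨nn, rfl⟩
  -- basic operator norm facts
  have hA2 : ∀ m k : ℕ, k < m → ∀ u v : X,
      ‖calA A m (k+1) (P (k+1) u) - calA A m (k+1) (P (k+1) v)‖ ≤ a m (k+1) * ‖u - v‖ := by
    intro m k hk u v
    have h3 : calA A m (k+1) (P (k+1) u) - calA A m (k+1) (P (k+1) v)
        = ((calA A m (k+1)).comp (P (k+1))) (u - v) := by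
      simp [map_sub]
    rw [h3]
    exact le_trans (ContinuousLinearMap.le_opNorm _ _)
      (mul_le_mul_of_nonneg_right (hD1 m (k+1) hk) (norm_nonneg _))
  have hA1 : ∀ m k : ℕ, k < m → ∀ u : X,
      ‖calA A m (k+1) (P (k+1) u)‖ ≤ a m (k+1) * ‖u‖ := by
    intro m k hk u
    simpa using hA2 m k hk u 0
  have hfL : ∀ (k : ℕ) (u : X), ‖f k u‖ ≤ L k * ‖u‖ := by
    intro k u
    simpa [hf0 k] using hLip k u 0
  -- the maps `φ, ψ` vanish at `0` in `X` and are bounded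
  have hφn : ∀ (k : ℕ) (ζ : LinearMap.range (P k : X →ₗ[ℝ] X)), ‖(φ k ζ : X)‖ ≤ ‖(ζ : X)‖ := by
    intro k ζ
    have h3 := hφlip k ζ 0
    simpa [hφ0 k] using h3
  have hψn : ∀ (k : ℕ) (ζ : LinearMap.range (P k : X →ₗ[ℝ] X)), ‖(ψ k ζ : X)‖ ≤ ‖(ζ : X)‖ := by
    intro k ζ
    have h3 := hψlip k ζ 0
    simpa [hψ0 k] using h3
  -- a point in the range of `P k` is fixed by `P k`
  have hPfix : ∀ (k : ℕ) (ζ : LinearMap.range (P k : X →ₗ[ℝ] X)), P k (ζ : X) = (ζ : X) := by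
    intro k ζ
    obtain ⟨v, hv⟩ := ζ.2
    have h3 := congrArg (fun T : X →L[ℝ] X => T v) (hproj k)
    rw [← hv]; simpa using h3
  refine ⟨?_, hfrac⟩
  intro n ξ hξ
  have hξX : (ξ : X) ≠ 0 := fun h => hξ (Subtype.ext h)
  have hξpos : 0 < ‖(ξ : X)‖ := norm_pos_iff.2 hξX
  -- the distance d
  set S : Set ℝ := {r : ℝ | ∃ (k : ℕ) (ζ : LinearMap.range (P k : X →ₗ[ℝ] X)), ζ ≠ 0 ∧
      r = ‖(φ k ζ : X) - (ψ k ζ : X)‖ / ‖(ζ : X)‖} with hSdef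
  set d : ℝ := sSup S with hddef
  have hSbdd : BddAbove S := by
    refine ⟨2, ?_⟩
    rintro r ⟨k, ζ, hζ, rfl⟩
    have hζpos : 0 < ‖(ζ : X)‖ := norm_pos_iff.2 fun h => hζ (Subtype.ext h)
    rw [div_le_iff₀ hζpos]
    calc ‖(φ k ζ : X) - (ψ k ζ : X)‖ ≤ ‖(φ k ζ : X)‖ + ‖(ψ k ζ : X)‖ := norm_sub_le _ _
      _ ≤ ‖(ζ : X)‖ + ‖(ζ : X)‖ := add_le_add (hφn k ζ) (hψn k ζ)
      _ = 2 * ‖(ζ : X)‖ := by ring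
  have hd0 : 0 ≤ d := by
    refine le_trans ?_ (le_csSup hSbdd ⟨n, ξ, hξ, rfl⟩)
    positivity
  have hd : ∀ (k : ℕ) (ζ : LinearMap.range (P k : X →ₗ[ℝ] X)),
      ‖(φ k ζ : X) - (ψ k ζ : X)‖ ≤ d * ‖(ζ : X)‖ := by
    intro k ζ
    by_cases hζ : ζ = 0
    · rw [hζ, hφ0 k, hψ0 k]
      simpa using mul_nonneg hd0 (norm_nonneg ((0 : LinearMap.range (P k : X →ₗ[ℝ] X)) : X))
    · have hζpos : 0 < ‖(ζ : X)‖ := norm_pos_iff.2 fun h => hζ (Subtype.ext h)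
      have h3 := le_csSup hSbdd (show _ ∈ S from ⟨k, ζ, hζ, rfl⟩)
      rw [div_le_iff₀ hζpos] at h3
      exact h3
  obtain ⟨hy0, ⟨Cy, hCy⟩, hyeq⟩ := hy n
  obtain ⟨hx0, ⟨Cx, hCx⟩, hxeq⟩ := hx n
  -- a generic bound for the sums appearing in the fixed point equations
  have hsumbound : ∀ (m : ℕ), n ≤ m → ∀ (g : ℕ → X) (c : ℝ), 0 ≤ c →
      (∀ k : ℕ, n ≤ k → k < m → ‖g k‖ ≤ L k * (c * (a k n * ‖(ξ:X)‖))) →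
      ‖∑ k ∈ Finset.Ico n m, calA A m (k+1) (P (k+1) (g k))‖
        ≤ (α * a m n) * (c * ‖(ξ:X)‖) := by
    intro m hm g c hc hg
    calc ‖∑ k ∈ Finset.Ico n m, calA A m (k+1) (P (k+1) (g k))‖
        ≤ ∑ k ∈ Finset.Ico n m, ‖calA A m (k+1) (P (k+1) (g k))‖ := norm_sum_le _ _
      _ ≤ ∑ k ∈ Finset.Ico n m, (a m (k+1) * (a k n * L k)) * (c * ‖(ξ:X)‖) := by
          refine Finset.sum_le_sum fun k hk => ?_
          rw [Finset.mem_Ico] at hk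
          calc ‖calA A m (k+1) (P (k+1) (g k))‖ ≤ a m (k+1) * ‖g k‖ := hA1 m k hk.2 _
            _ ≤ a m (k+1) * (L k * (c * (a k n * ‖(ξ:X)‖))) :=
                mul_le_mul_of_nonneg_left (hg k hk.1 hk.2) (ha m (k+1) hk.2).le
            _ = (a m (k+1) * (a k n * L k)) * (c * ‖(ξ:X)‖) := by ring
      _ = (∑ k ∈ Finset.Ico n m, a m (k+1) * (a k n * L k)) * (c * ‖(ξ:X)‖) := by
          rw [Finset.sum_mul]
      _ ≤ (α * a m n) * (c * ‖(ξ:X)‖) :=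
          mul_le_mul_of_nonneg_right (hαsum m n hm) (mul_nonneg hc (norm_nonneg _))
  -- `‖𝒜_{m,n} ξ‖ ≤ a m n ‖ξ‖`
  have hAξ : ∀ m : ℕ, n ≤ m → ‖calA A m n (ξ : X)‖ ≤ a m n * ‖(ξ:X)‖ := by
    intro m hm
    have h3 : calA A m n (ξ : X) = ((calA A m n).comp (P n)) (ξ : X) := by
      simp [hPfix n ξ]
    rw [h3]
    exact le_trans (ContinuousLinearMap.le_opNorm _ _)
      (mul_le_mul_of_nonneg_right (hD1 m n hm) (norm_nonneg _))
  -- bound on y : ‖y_m ξ‖ ≤ γ a_{m n} ‖ξ‖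
  set Ty : Set ℝ := {r : ℝ | ∃ m : ℕ, n ≤ m ∧ r = ‖(y n m ξ : X)‖ / (a m n * ‖(ξ:X)‖)}
    with hTydef
  set ρ : ℝ := sSup Ty with hρdef
  have hTyne : Ty.Nonempty := ⟨_, n, le_rfl, rfl⟩
  have hTybdd : BddAbove Ty := by
    refine ⟨Cy, ?_⟩
    rintro r ⟨m, hm, rfl⟩
    rw [div_le_iff₀ (mul_pos (ha m n hm) hξpos)]
    exact hCy m hm ξ
  have hρle : ∀ m : ℕ, n ≤ m → ‖(y n m ξ : X)‖ ≤ ρ * (a m n * ‖(ξ:X)‖) := by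
    intro m hm
    have h3 := le_csSup hTybdd (show _ ∈ Ty from ⟨m, hm, rfl⟩)
    rw [div_le_iff₀ (mul_pos (ha m n hm) hξpos)] at h3
    exact h3
  have hρ0 : 0 ≤ ρ := le_trans (div_nonneg (norm_nonneg _) (mul_nonneg (ha n n le_rfl).le (norm_nonneg _))) (le_csSup hTybdd ⟨n, le_rfl, rfl⟩)
  have hystep : ∀ m : ℕ, n ≤ m →
      ‖(y n m ξ : X)‖ ≤ (1 + α * (2*ρ)) * (a m n * ‖(ξ:X)‖) := by
    intro m hm
    rw [hyeq m hm]
    calc ‖calA A m n (ξ:X) + ∑ k ∈ Finset.Ico n m,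
          calA A m (k+1) (P (k+1) (f k ((y n k ξ : X) + (ψ k (y n k ξ) : X))))‖
        ≤ ‖calA A m n (ξ:X)‖ + ‖∑ k ∈ Finset.Ico n m,
            calA A m (k+1) (P (k+1) (f k ((y n k ξ : X) + (ψ k (y n k ξ) : X))))‖ :=
          norm_add_le _ _
      _ ≤ a m n * ‖(ξ:X)‖ + (α * a m n) * ((2*ρ) * ‖(ξ:X)‖) := by
          refine add_le_add (hAξ m hm) (hsumbound m hm _ (2*ρ) (by linarith) ?_)
          intro k hk _
          calc ‖f k ((y n k ξ : X) + (ψ k (y n k ξ) : X))‖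
              ≤ L k * ‖(y n k ξ : X) + (ψ k (y n k ξ) : X)‖ := hfL k _
            _ ≤ L k * ((2*ρ) * (a k n * ‖(ξ:X)‖)) := by
                refine mul_le_mul_of_nonneg_left ?_ (hL0 k)
                calc ‖(y n k ξ : X) + (ψ k (y n k ξ) : X)‖
                    ≤ ‖(y n k ξ : X)‖ + ‖(ψ k (y n k ξ) : X)‖ := norm_add_le _ _
                  _ ≤ ‖(y n k ξ : X)‖ + ‖(y n k ξ : X)‖ :=
                      add_le_add le_rfl (hψn k _)
                  _ ≤ ρ * (a k n * ‖(ξ:X)‖) + ρ * (a k n * ‖(ξ:X)‖) :=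
                      add_le_add (hρle k hk) (hρle k hk)
                  _ = (2*ρ) * (a k n * ‖(ξ:X)‖) := by ring
      _ = (1 + α * (2*ρ)) * (a m n * ‖(ξ:X)‖) := by ring
  have hρbound : ρ ≤ 1 + α * (2*ρ) := by
    refine csSup_le hTyne ?_
    rintro r ⟨m, hm, rfl⟩
    rw [div_le_iff₀ (mul_pos (ha m n hm) hξpos)]
    exact hystep m hm
  have hργ : ρ ≤ γ := by
    have h3 : ρ * (1 - 2*α) ≤ 1 := by nlinarith [hρbound]
    have h4 := mul_le_mul_of_nonneg_right h3 hγpos.le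
    calc ρ = ρ * (1 - 2*α) * γ := by rw [mul_assoc, hγ, mul_one]
      _ ≤ 1 * γ := h4
      _ = γ := one_mul γ
  -- bound on x - y
  set Txy : Set ℝ := {r : ℝ | ∃ m : ℕ, n ≤ m ∧
      r = ‖(x n m ξ : X) - (y n m ξ : X)‖ / (a m n * ‖(ξ:X)‖)} with hTxydef
  set σ : ℝ := sSup Txy with hσdef
  have hTxyne : Txy.Nonempty := ⟨_, n, le_rfl, rfl⟩
  have hTxybdd : BddAbove Txy := by
    refine ⟨Cx + Cy, ?_⟩
    rintro r ⟨m, hm, rfl⟩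
    rw [div_le_iff₀ (mul_pos (ha m n hm) hξpos)]
    calc ‖(x n m ξ : X) - (y n m ξ : X)‖ ≤ ‖(x n m ξ : X)‖ + ‖(y n m ξ : X)‖ :=
          norm_sub_le _ _
      _ ≤ Cx * (a m n * ‖(ξ:X)‖) + Cy * (a m n * ‖(ξ:X)‖) :=
          add_le_add (hCx m hm ξ) (hCy m hm ξ)
      _ = (Cx + Cy) * (a m n * ‖(ξ:X)‖) := by ring
  have hσle : ∀ m : ℕ, n ≤ m →
      ‖(x n m ξ : X) - (y n m ξ : X)‖ ≤ σ * (a m n * ‖(ξ:X)‖) := by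
    intro m hm
    have h3 := le_csSup hTxybdd (show _ ∈ Txy from ⟨m, hm, rfl⟩)
    rw [div_le_iff₀ (mul_pos (ha m n hm) hξpos)] at h3
    exact h3
  have hσ0 : 0 ≤ σ := le_trans (div_nonneg (norm_nonneg _) (mul_nonneg (ha n n le_rfl).le (norm_nonneg _))) (le_csSup hTxybdd ⟨n, le_rfl, rfl⟩)
  have hM0 : 0 ≤ 2*σ + d*γ := by nlinarith [mul_nonneg hd0 hγpos.le]
  -- the key pointwise estimate
  have hkey : ∀ k : ℕ, n ≤ k →
      ‖f k ((x n k ξ : X) + (φ k (x n k ξ) : X)) - f k ((y n k ξ : X) + (ψ k (y n k ξ) : X))‖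
        ≤ L k * ((2*σ + d*γ) * (a k n * ‖(ξ:X)‖)) := by
    intro k hk
    refine le_trans (hLip k _ _) (mul_le_mul_of_nonneg_left ?_ (hL0 k))
    calc ‖(x n k ξ : X) + (φ k (x n k ξ) : X) - ((y n k ξ : X) + (ψ k (y n k ξ) : X))‖
        ≤ ‖(x n k ξ : X) - (y n k ξ : X)‖ + ‖(φ k (x n k ξ) : X) - (ψ k (y n k ξ) : X)‖ := by
          have h3 : (x n k ξ : X) + (φ k (x n k ξ) : X) - ((y n k ξ : X) + (ψ k (y n k ξ) : X))
              = ((x n k ξ : X) - (y n k ξ : X))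
                + ((φ k (x n k ξ) : X) - (ψ k (y n k ξ) : X)) := by abel
          rw [h3]; exact norm_add_le _ _
      _ ≤ ‖(x n k ξ : X) - (y n k ξ : X)‖
            + (‖(φ k (x n k ξ) : X) - (φ k (y n k ξ) : X)‖
              + ‖(φ k (y n k ξ) : X) - (ψ k (y n k ξ) : X)‖) := by
          refine add_le_add le_rfl ?_
          have h3 : (φ k (x n k ξ) : X) - (ψ k (y n k ξ) : X)
              = ((φ k (x n k ξ) : X) - (φ k (y n k ξ) : X))
                + ((φ k (y n k ξ) : X) - (ψ k (y n k ξ) : X)) := by abel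
          rw [h3]; exact norm_add_le _ _
      _ ≤ σ * (a k n * ‖(ξ:X)‖)
            + (‖(x n k ξ : X) - (y n k ξ : X)‖ + d * ‖(y n k ξ : X)‖) := by
          exact add_le_add (hσle k hk) (add_le_add (hφlip k _ _) (hd k _))
      _ ≤ σ * (a k n * ‖(ξ:X)‖)
            + (σ * (a k n * ‖(ξ:X)‖) + d * (γ * (a k n * ‖(ξ:X)‖))) := by
          refine add_le_add le_rfl (add_le_add (hσle k hk) ?_)
          refine mul_le_mul_of_nonneg_left ?_ hd0
          exact le_trans (hρle k hk) (mul_le_mul_of_nonneg_right hργ (mul_nonneg (ha k n hk).le (norm_nonneg _)))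
      _ = (2*σ + d*γ) * (a k n * ‖(ξ:X)‖) := by ring
  -- σ satisfies σ ≤ α (2σ + dγ)
  have hσstep : ∀ m : ℕ, n ≤ m →
      ‖(x n m ξ : X) - (y n m ξ : X)‖ ≤ (α * a m n) * ((2*σ + d*γ) * ‖(ξ:X)‖) := by
    intro m hm
    have hdiff : (x n m ξ : X) - (y n m ξ : X)
        = ∑ k ∈ Finset.Ico n m, calA A m (k+1) (P (k+1)
            (f k ((x n k ξ : X) + (φ k (x n k ξ) : X))
              - f k ((y n k ξ : X) + (ψ k (y n k ξ) : X)))) := by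
      rw [hxeq m hm, hyeq m hm, add_sub_add_left_eq_sub, ← Finset.sum_sub_distrib]
      have h3 : ∀ k ∈ Finset.Ico n m,
          calA A m (k+1) (P (k+1) (f k ((x n k ξ : X) + (φ k (x n k ξ) : X))))
            - calA A m (k+1) (P (k+1) (f k ((y n k ξ : X) + (ψ k (y n k ξ) : X))))
          = calA A m (k+1) (P (k+1)
              (f k ((x n k ξ : X) + (φ k (x n k ξ) : X))
                - f k ((y n k ξ : X) + (ψ k (y n k ξ) : X)))) := by
        intro k _; simp [map_sub]
      rw [Finset.sum_congr rfl h3]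
    rw [hdiff]
    exact hsumbound m hm _ (2*σ + d*γ) hM0 fun k hk _ => hkey k hk
  have hσbound : σ ≤ α * (2*σ + d*γ) := by
    refine csSup_le hTxyne ?_
    rintro r ⟨m, hm, rfl⟩
    rw [div_le_iff₀ (mul_pos (ha m n hm) hξpos)]
    calc ‖(x n m ξ : X) - (y n m ξ : X)‖ ≤ (α * a m n) * ((2*σ + d*γ) * ‖(ξ:X)‖) :=
          hσstep m hm
      _ = α * (2*σ + d*γ) * (a m n * ‖(ξ:X)‖) := by ring
  have hσfinal : σ ≤ α * d * γ^2 := by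
    have h3 : σ * (1 - 2*α) ≤ α * d * γ := by nlinarith [hσbound]
    have h4 := mul_le_mul_of_nonneg_right h3 hγpos.le
    calc σ = σ * (1 - 2*α) * γ := by rw [mul_assoc, hγ, mul_one]
      _ ≤ α * d * γ * γ := h4
      _ = α * d * γ^2 := by ring
  -- the crucial combination : 2σ + dγ ≤ d γ²
  have hγ2 : d*γ^2 - 2*(α*(d*γ^2)) = d*γ := by linear_combination (d*γ) * hγ
  have hcomb : 2*σ + d*γ ≤ d * γ^2 := by linarith [hσfinal, hγ2]
  -- the final estimate via the sums
  have hsub := (hΦφ n ξ).sub (hΦψ n ξ)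
  have hcsum : HasSum
      (fun j : ℕ => (b (n + j + 1) n * (a (n + j) n * L (n + j))) * ((2*σ + d*γ) * ‖(ξ:X)‖))
      ((∑' j : ℕ, b (n + j + 1) n * (a (n + j) n * L (n + j))) * ((2*σ + d*γ) * ‖(ξ:X)‖)) :=
    (hsum n).hasSum.mul_right _
  have hnorm : ‖-(φ' n ξ : X) - -(ψ' n ξ : X)‖
      ≤ (∑' j : ℕ, b (n + j + 1) n * (a (n + j) n * L (n + j))) * ((2*σ + d*γ) * ‖(ξ:X)‖) := by
    rw [← hsub.tsum_eq]
    refine tsum_of_norm_bounded hcsum ?_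
    intro j
    have hj : n ≤ n + j := Nat.le_add_right n j
    have hj1 : n ≤ n + j + 1 := by omega
    have hmap : B (n + j + 1) n (f (n + j)
          ((x n (n + j) ξ : X) + (φ (n + j) (x n (n + j) ξ) : X)))
        - B (n + j + 1) n (f (n + j)
          ((y n (n + j) ξ : X) + (ψ (n + j) (y n (n + j) ξ) : X)))
        = B (n + j + 1) n
          (f (n + j) ((x n (n + j) ξ : X) + (φ (n + j) (x n (n + j) ξ) : X))
            - f (n + j) ((y n (n + j) ξ : X) + (ψ (n + j) (y n (n + j) ξ) : X))) := by
      simp [map_sub]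
    rw [hmap]
    calc ‖B (n + j + 1) n _‖
        ≤ ‖B (n + j + 1) n‖ * ‖f (n + j) ((x n (n + j) ξ : X) + (φ (n + j) (x n (n + j) ξ) : X))
            - f (n + j) ((y n (n + j) ξ : X) + (ψ (n + j) (y n (n + j) ξ) : X))‖ :=
          ContinuousLinearMap.le_opNorm _ _
      _ ≤ b (n + j + 1) n * (L (n + j) * ((2*σ + d*γ) * (a (n + j) n * ‖(ξ:X)‖))) := by
          refine mul_le_mul (hD2 _ _ hj1) (hkey (n + j) hj) (norm_nonneg _) ?_
          exact (hb _ _ hj1).le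
      _ = (b (n + j + 1) n * (a (n + j) n * L (n + j))) * ((2*σ + d*γ) * ‖(ξ:X)‖) := by ring
  have hfin : ‖(φ' n ξ : X) - (ψ' n ξ : X)‖
      ≤ β * ((2*σ + d*γ) * ‖(ξ:X)‖) := by
    have h3 : ‖(φ' n ξ : X) - (ψ' n ξ : X)‖ = ‖-(φ' n ξ : X) - -(ψ' n ξ : X)‖ := by
      rw [← neg_sub_neg, norm_sub_rev]
    rw [h3]
    exact le_trans hnorm (mul_le_mul_of_nonneg_right (hβsum n) (mul_nonneg hM0 (norm_nonneg _)))
  calc ‖(φ' n ξ : X) - (ψ' n ξ : X)‖ ≤ β * ((2*σ + d*γ) * ‖(ξ:X)‖) := hfin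
    _ ≤ β * ((d * γ^2) * ‖(ξ:X)‖) := by
        refine mul_le_mul_of_nonneg_left ?_ hβ0
        exact mul_le_mul_of_nonneg_right hcomb (norm_nonneg _)
    _ = β / (1 - 2*α)^2 * d * ‖(ξ:X)‖ := by
        rw [hγdef]; field_simp
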